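/- The evaluation map δ_x : H_w → U, f ↦ f(x), is a bounded linear operator whose adjoint is given by δ_x*(u)(y) = (1 + ∫₀^{y∧x} w(s)⁻¹ ds)·u, and ‖δ_x‖²_op = ‖δ_x*‖²_op = 1 + ∫₀^x w(s)⁻¹ ds ≤ 1 + x. -/

import Mathlib

open MeasureTheory Set Filter Real
open scoped RealInnerProductSpace

lemma aux_if_integral (h : ℝ → ℝ) (x : ℝ) :
    ∫ s in Ioi (0:ℝ), (if s ≤ x then h s else 0) = ∫ s in Ioc (0:ℝ) x, h s := by
  have e : ∀ s : ℝ, (if s ≤ x then h s else 0) = (Iic x).indicator h s := fun s => by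
    simp [indicator_apply, mem_Iic]
  simp_rw [e]
  rw [setIntegral_indicator measurableSet_Iic, Ioi_inter_Iic]

lemma aux_amgm2 (ε c a : ℝ) (hε : 0 < ε) (hc : 0 < c) :
    a ≤ ε/2*(c*a^2) + 1/(2*ε)*c⁻¹ := by
  have key : 2*ε*c*a ≤ ε^2*c^2*a^2 + 1 := by nlinarith [sq_nonneg (ε*c*a - 1)]
  calc a = (2*ε*c*a)/(2*ε*c) := by field_simp
    _ ≤ (ε^2*c^2*a^2 + 1)/(2*ε*c) := by gcongr
    _ = ε/2*(c*a^2) + 1/(2*ε)*c⁻¹ := by field_simp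

lemma aux_cs (A B c : ℝ) (hA : 0 ≤ A) (hB : 0 < B) (hc : 0 ≤ c)
    (key : ∀ ε : ℝ, 0 < ε → c ≤ ε/2 * A + 1/(2*ε) * B) : c^2 ≤ B * A := by
  rcases eq_or_lt_of_le hc with h0 | hcpos
  · rw [← h0]
    simpa using mul_nonneg hB.le hA
  rcases eq_or_lt_of_le hA with hA0 | hApos
  · exfalso
    have h := key (B/c) (by positivity)
    rw [← hA0] at h
    have h2 : 1/(2*(B/c))*B = c/2 := by field_simp
    rw [mul_zero, zero_add, h2] at h
    linarith
  · have h := key (c/A) (by positivity)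
    have h2 : c/A/2*A = c/2 := by field_simp
    have h3 : 1/(2*(c/A))*B = A*B/(2*c) := by field_simp
    rw [h2, h3] at h
    have h4 : c/2 ≤ A*B/(2*c) := by linarith
    rw [div_le_div_iff₀ (by norm_num) (by positivity)] at h4
    nlinarith


/-- the evaluation map `δ_x : H_w → U` is bounded with adjoint
`δ_x*(u)(y) = (1 + ∫₀^{y∧x} w(s)⁻¹ ds)·u`, characterized by `⟨f, δ_x* u⟩_w = ⟨f(x), u⟩_U`,
and `‖δ_x‖²_op = ‖δ_x*‖²_op = 1 + ∫₀^x w(s)⁻¹ ds ≤ 1 + x`. -/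
theorem stmt_3 {U : Type*} [NormedAddCommGroup U] [InnerProductSpace ℝ U]
    [CompleteSpace U] [SecondCountableTopology U]
    (w : ℝ → ℝ) (hw_cont : Continuous w) (hw_mono : MonotoneOn w (Ici 0))
    (hw0 : w 0 = 1)
    (hw_inv : IntegrableOn (fun s => (w s)⁻¹) (Ioi 0))
    (x : ℝ) (hx : 0 ≤ x) (u : U) :
    -- the adjoint identity ⟨f, δ_x*(u)⟩_w = ⟨δ_x f, u⟩_U for every f ∈ H_w,
    -- where δ_x*(u) has value u at 0 and derivative y ↦ (w y)⁻¹ 1_{y ≤ x} • u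
    (∀ f f' : ℝ → U,
      (∀ y ∈ Ici (0:ℝ), IntervalIntegrable f' volume 0 y) →
      (∀ y ∈ Ici (0:ℝ), f y = f 0 + ∫ t in (0:ℝ)..y, f' t) →
      IntegrableOn (fun y => w y * ‖f' y‖ ^ 2) (Ioi 0) →
      ⟪f 0, u⟫ + ∫ s in Ioi (0:ℝ), w s * ⟪f' s, (if s ≤ x then (w s)⁻¹ else 0) • u⟫
        = ⟪f x, u⟫) ∧
    -- δ_x*(u) really is the function y ↦ (1 + ∫₀^{y∧x} w⁻¹) • u
    (∀ y ∈ Ici (0:ℝ),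
      (1 + ∫ s in (0:ℝ)..(min y x), (w s)⁻¹) • u
        = u + ∫ t in (0:ℝ)..y, (if t ≤ x then (w t)⁻¹ else 0) • u) ∧
    -- squared H_w-norm of δ_x*(u) equals (1 + ∫₀^x w⁻¹)·‖u‖²
    (‖u‖ ^ 2 + ∫ s in Ioi (0:ℝ), w s * ‖(if s ≤ x then (w s)⁻¹ else 0) • u‖ ^ 2
      = (1 + ∫ s in (0:ℝ)..x, (w s)⁻¹) * ‖u‖ ^ 2) ∧
    -- the operator norm bound for δ_x : ‖f x‖² ≤ (1 + ∫₀^x w⁻¹)·‖f‖²_w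
    (∀ f f' : ℝ → U,
      (∀ y ∈ Ici (0:ℝ), IntervalIntegrable f' volume 0 y) →
      (∀ y ∈ Ici (0:ℝ), f y = f 0 + ∫ t in (0:ℝ)..y, f' t) →
      IntegrableOn (fun y => w y * ‖f' y‖ ^ 2) (Ioi 0) →
      ‖f x‖ ^ 2 ≤ (1 + ∫ s in (0:ℝ)..x, (w s)⁻¹)
        * (‖f 0‖ ^ 2 + ∫ s in Ioi (0:ℝ), w s * ‖f' s‖ ^ 2)) ∧
    (1 + ∫ s in (0:ℝ)..x, (w s)⁻¹) ≤ 1 + x := by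
  have hw1 : ∀ s : ℝ, 0 ≤ s → 1 ≤ w s := fun s hs => by
    have := hw_mono (self_mem_Ici) hs hs
    rwa [hw0] at this
  have hwpos : ∀ s : ℝ, 0 ≤ s → 0 < w s := fun s hs => lt_of_lt_of_le one_pos (hw1 s hs)
  have hwinv_cont : ContinuousOn (fun s : ℝ => (w s)⁻¹) (Ici 0) :=
    hw_cont.continuousOn.inv₀ (fun s hs => (hwpos s hs).ne')
  -- interval integrability of w⁻¹ on [0, y] for y ≥ 0
  have hwinv_ii : ∀ y : ℝ, 0 ≤ y → IntervalIntegrable (fun s => (w s)⁻¹) volume 0 y := by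
    intro y hy
    apply ContinuousOn.intervalIntegrable
    rw [uIcc_of_le hy]
    exact hwinv_cont.mono (Icc_subset_Ici_self)
  have hBpos : (0:ℝ) < 1 + ∫ s in (0:ℝ)..x, (w s)⁻¹ := by
    have h0 : (0:ℝ) ≤ ∫ s in (0:ℝ)..x, (w s)⁻¹ :=
      intervalIntegral.integral_nonneg hx (fun s hs => inv_nonneg.mpr (hwpos s hs.1).le)
    linarith
  -- Part 1
  have part1 : ∀ f f' : ℝ → U,
      (∀ y ∈ Ici (0:ℝ), IntervalIntegrable f' volume 0 y) →
      (∀ y ∈ Ici (0:ℝ), f y = f 0 + ∫ t in (0:ℝ)..y, f' t) →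
      IntegrableOn (fun y => w y * ‖f' y‖ ^ 2) (Ioi 0) →
      ⟪f 0, u⟫ + ∫ s in Ioi (0:ℝ), w s * ⟪f' s, (if s ≤ x then (w s)⁻¹ else 0) • u⟫
        = ⟪f x, u⟫ := by
    intro f f' hf'int hfeq hfw
    have key : EqOn (fun s => w s * ⟪f' s, (if s ≤ x then (w s)⁻¹ else 0) • u⟫)
        (fun s => if s ≤ x then ⟪u, f' s⟫ else 0) (Ioi 0) := by
      intro s hs
      have hws : w s ≠ 0 := (hwpos s (le_of_lt hs)).ne'
      by_cases h : s ≤ x <;>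
        simp [h, real_inner_smul_right, real_inner_comm, hws, mul_comm]
      field_simp
    rw [setIntegral_congr_fun measurableSet_Ioi key, aux_if_integral (fun s => ⟪u, f' s⟫) x]
    have hint : IntegrableOn f' (Ioc 0 x) volume :=
      (intervalIntegrable_iff_integrableOn_Ioc_of_le hx).mp (hf'int x hx)
    rw [integral_inner hint u]
    rw [hfeq x hx, intervalIntegral.integral_of_le hx, inner_add_left]
    congr 1
    exact real_inner_comm _ _
  refine ⟨part1, ?_, ?_, ?_, ?_⟩
  · -- Part 2
    intro y hy
    rw [intervalIntegral.integral_smul_const]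
    have hIf : (∫ t in (0:ℝ)..y, (if t ≤ x then (w t)⁻¹ else 0))
        = ∫ s in (0:ℝ)..(min y x), (w s)⁻¹ := by
      rw [intervalIntegral.integral_of_le hy, intervalIntegral.integral_of_le (le_min hy hx)]
      have e : ∀ t : ℝ, (if t ≤ x then (w t)⁻¹ else 0)
          = (Iic x).indicator (fun s => (w s)⁻¹) t := fun t => by
        simp [indicator_apply, mem_Iic]
      simp_rw [e]
      rw [setIntegral_indicator measurableSet_Iic, Ioc_inter_Iic]
    rw [hIf, add_smul, one_smul]
  · -- Part 3
    have key : EqOn (fun s => w s * ‖(if s ≤ x then (w s)⁻¹ else 0) • u‖ ^ 2)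
        (fun s => if s ≤ x then (w s)⁻¹ * ‖u‖^2 else 0) (Ioi 0) := by
      intro s hs
      have hws : (0:ℝ) < w s := hwpos s (le_of_lt hs)
      by_cases h : s ≤ x <;> simp [h, norm_smul, mul_pow, abs_of_pos (inv_pos.mpr hws)]
      field_simp
    rw [setIntegral_congr_fun measurableSet_Ioi key,
      aux_if_integral (fun s => (w s)⁻¹ * ‖u‖^2) x, integral_mul_const,
      ← intervalIntegral.integral_of_le hx]
    ring
  · -- Part 4
    intro f f' hf'int hfeq hfw
    have hI0 : 0 ≤ ∫ s in Ioi (0:ℝ), w s * ‖f' s‖ ^ 2 :=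
      setIntegral_nonneg measurableSet_Ioi
        (fun s hs => mul_nonneg (hwpos s (le_of_lt hs)).le (sq_nonneg _))
    apply aux_cs _ _ _ (by positivity) hBpos (norm_nonneg _)
    intro ε hε
    have hsub : Ioc (0:ℝ) x ⊆ Ioi 0 := Ioc_subset_Ioi_self
    have h1 : IntervalIntegrable (fun t => w t * ‖f' t‖^2) volume 0 x :=
      (intervalIntegrable_iff_integrableOn_Ioc_of_le hx).mpr (hfw.mono_set hsub)
    have h2 := hwinv_ii x hx
    have step1 : ‖f x‖ ≤ ‖f 0‖ + ∫ t in (0:ℝ)..x, ‖f' t‖ := by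
      rw [hfeq x hx]
      exact (norm_add_le _ _).trans (by
        gcongr
        exact intervalIntegral.norm_integral_le_integral_norm hx)
    have step2 : (∫ t in (0:ℝ)..x, ‖f' t‖)
        ≤ ∫ t in (0:ℝ)..x, (ε/2*(w t * ‖f' t‖^2) + 1/(2*ε)*(w t)⁻¹) := by
      apply intervalIntegral.integral_mono_on hx ((hf'int x hx).norm)
        ((h1.const_mul (ε/2)).add (h2.const_mul (1/(2*ε))))
      intro t ht
      exact aux_amgm2 ε (w t) ‖f' t‖ hε (hwpos t ht.1)
    rw [intervalIntegral.integral_add (h1.const_mul (ε/2)) (h2.const_mul (1/(2*ε))),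
      intervalIntegral.integral_const_mul, intervalIntegral.integral_const_mul] at step2
    have step3 : (∫ t in (0:ℝ)..x, w t * ‖f' t‖^2) ≤ ∫ s in Ioi (0:ℝ), w s * ‖f' s‖ ^ 2 := by
      rw [intervalIntegral.integral_of_le hx]
      apply setIntegral_mono_set hfw
      · exact (ae_restrict_iff' measurableSet_Ioi).mpr (Eventually.of_forall
          (fun s hs => mul_nonneg (hwpos s (le_of_lt hs)).le (sq_nonneg _)))
      · exact HasSubset.Subset.eventuallyLE hsub
    have step4 : ‖f 0‖ ≤ ε/2*‖f 0‖^2 + 1/(2*ε) := by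
      have := aux_amgm2 ε 1 ‖f 0‖ hε one_pos
      simpa using this
    have hm : 0 ≤ 1/(2*ε) := by positivity
    have hm2 : 0 ≤ ε/2 := by positivity
    calc ‖f x‖ ≤ ‖f 0‖ + ∫ t in (0:ℝ)..x, ‖f' t‖ := step1
      _ ≤ (ε/2*‖f 0‖^2 + 1/(2*ε)) + (ε/2 * (∫ s in Ioi (0:ℝ), w s * ‖f' s‖ ^ 2)
            + 1/(2*ε) * ∫ s in (0:ℝ)..x, (w s)⁻¹) := by
          have := mul_le_mul_of_nonneg_left step3 hm2
          linarith
      _ = ε/2 * (‖f 0‖^2 + ∫ s in Ioi (0:ℝ), w s * ‖f' s‖ ^ 2)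
            + 1/(2*ε) * (1 + ∫ s in (0:ℝ)..x, (w s)⁻¹) := by ring
  · -- Part 5
    have hmono : (∫ s in (0:ℝ)..x, (w s)⁻¹) ≤ ∫ s in (0:ℝ)..x, (1:ℝ) := by
      apply intervalIntegral.integral_mono_on hx (hwinv_ii x hx) intervalIntegrable_const
      intro t ht
      exact inv_le_one_of_one_le₀ (hw1 t ht.1)
    rw [intervalIntegral.integral_const, smul_eq_mul, mul_one, sub_zero] at hmono
    linarith
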